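/- Let g(x) = (log x)² on (0,∞). For any 0 < δ < 1, define h_δ(x) = g(δ) + x·g'(e) for x ∈ [0,e] and h_δ(x) = g(δ) + e·g'(e) + g(x) - g(e) for x ∈ [e,∞), where g'(e) = 2/e. Then h_δ is concave and nonnegative on [0,∞), and h_δ(x) ≥ g(x) for all x ∈ [δ,∞). -/

import Mathlib

open Real Set

lemma log_le_div_e {x : ℝ} (hx : 0 < x) : Real.log x ≤ x / Real.exp 1 := by
  have h := Real.log_le_sub_one_of_pos (x := x / Real.exp 1) (by positivity)
  rw [Real.log_div (ne_of_gt hx) (ne_of_gt (Real.exp_pos 1)), Real.log_exp] at h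
  linarith

lemma hde (c : ℝ) {x : ℝ} (hx : 0 < x) :
    HasDerivAt (fun y => c + (Real.log y)^2) (2 * Real.log x / x) x := by
  have h : HasDerivAt (fun y => c + (Real.log y)^2) (((2:ℕ):ℝ) * Real.log x ^ (2 - 1) * x⁻¹) x :=
    ((Real.hasDerivAt_log (ne_of_gt hx)).pow 2).const_add c
  convert h using 1
  ring

lemma hlin (c k x : ℝ) : HasDerivAt (fun y => c + y * k) k x := by
  have h := ((hasDerivAt_id x).mul_const k).const_add c
  simpa using h

theorem stmt_3 (δ : ℝ) (hδ : δ ∈ Set.Ioo (0:ℝ) 1)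
    (g h : ℝ → ℝ)
    (hg : ∀ x, g x = (Real.log x)^2)
    (hh : ∀ x, h x = if x ≤ Real.exp 1 then g δ + x * (2 / Real.exp 1)
      else g δ + Real.exp 1 * (2 / Real.exp 1) + g x - g (Real.exp 1)) :
    ConcaveOn ℝ (Set.Ici (0:ℝ)) h ∧ (∀ x ∈ Set.Ici (0:ℝ), 0 ≤ h x) ∧
    ∀ x ∈ Set.Ici δ, g x ≤ h x := by
  have he : (0:ℝ) < Real.exp 1 := Real.exp_pos 1
  have hge : g (Real.exp 1) = 1 := by rw [hg, Real.log_exp]; norm_num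
  have hgδ : 0 ≤ g δ := by rw [hg]; positivity
  have hIci : ∀ x, Real.exp 1 ≤ x → h x = (g δ + 1) + (Real.log x)^2 := by
    intro x hx
    rw [hh]
    rcases eq_or_lt_of_le hx with rfl | hlt
    · simp only [le_refl, if_pos]
      rw [hg, Real.log_exp]
      field_simp
      ring
    · rw [if_neg (not_le.mpr hlt), hge]
      simp only [hg]
      field_simp
      ring
  have hIic : ∀ x, x ≤ Real.exp 1 → h x = g δ + x * (2 / Real.exp 1) := by
    intro x hx; rw [hh, if_pos hx]
  set D : ℝ → ℝ := fun x => if x ≤ Real.exp 1 then 2 / Real.exp 1 else 2 * Real.log x / x with hD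
  have hderiv : ∀ x : ℝ, 0 < x → HasDerivAt h (D x) x := by
    intro x hx
    rcases lt_trichotomy x (Real.exp 1) with hlt | rfl | hgt
    · have hDx : D x = 2 / Real.exp 1 := if_pos hlt.le
      rw [hDx]
      have hev : h =ᶠ[nhds x] fun y => g δ + y * (2 / Real.exp 1) := by
        filter_upwards [Iio_mem_nhds hlt] with y hy
        exact hIic y (le_of_lt hy)
      exact (hlin (g δ) (2 / Real.exp 1) x).congr_of_eventuallyEq hev
    · have hDx : D (Real.exp 1) = 2 / Real.exp 1 := if_pos le_rfl
      rw [hDx]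
      have h1 : HasDerivWithinAt h (2 / Real.exp 1) (Iic (Real.exp 1)) (Real.exp 1) :=
        ((hlin (g δ) (2 / Real.exp 1) (Real.exp 1)).hasDerivWithinAt
          (s := Iic (Real.exp 1))).congr
          (fun y hy => hIic y hy) (hIic (Real.exp 1) le_rfl)
      have h2 : HasDerivWithinAt h (2 / Real.exp 1) (Ici (Real.exp 1)) (Real.exp 1) := by
        have hd := (hde (g δ + 1) hx).hasDerivWithinAt (s := Ici (Real.exp 1))
        have heq : (2 : ℝ) * Real.log (Real.exp 1) / (Real.exp 1) = 2 / Real.exp 1 := by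
          rw [Real.log_exp]; norm_num
        rw [heq] at hd
        exact hd.congr (fun y hy => hIci y hy) (hIci (Real.exp 1) le_rfl)
      have := h1.union h2
      rwa [Iic_union_Ici, hasDerivWithinAt_univ] at this
    · have hDx : D x = 2 * Real.log x / x := if_neg (not_le.mpr hgt)
      rw [hDx]
      have hev : h =ᶠ[nhds x] fun y => (g δ + 1) + (Real.log y)^2 := by
        filter_upwards [Ioi_mem_nhds hgt] with y hy
        exact hIci y (le_of_lt hy)
      exact (hde (g δ + 1) hx).congr_of_eventuallyEq hev
  have hlogdiv : ∀ x : ℝ, 0 < x → Real.log x / x ≤ 1 / Real.exp 1 := by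
    intro x hx
    rw [div_le_div_iff₀ hx he]
    have h3 := log_le_div_e hx
    calc Real.log x * Real.exp 1 ≤ (x / Real.exp 1) * Real.exp 1 :=
          mul_le_mul_of_nonneg_right h3 he.le
      _ = x := by field_simp
      _ = 1 * x := (one_mul x).symm
  have hanti : AntitoneOn D (Ioi (0:ℝ)) := by
    intro a ha b hb hab
    simp only [hD]
    by_cases hbe : b ≤ Real.exp 1
    · rw [if_pos hbe, if_pos (hab.trans hbe)]
    · rw [if_neg hbe]
      push_neg at hbe
      by_cases hae : a ≤ Real.exp 1
      · rw [if_pos hae]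
        have hlb := hlogdiv b hb
        rw [div_le_div_iff₀ hb he] at hlb
        rw [div_le_div_iff₀ hb he]
        nlinarith
      · rw [if_neg hae]
        push_neg at hae
        have hmono := Real.log_div_self_antitoneOn (a := a) (b := b) hae.le
          (hae.le.trans hab) hab
        simp only at hmono
        calc 2 * Real.log b / b = 2 * (Real.log b / b) := by ring
          _ ≤ 2 * (Real.log a / a) := by linarith
          _ = 2 * Real.log a / a := by ring
  have hcont : ContinuousOn h (Ici (0:ℝ)) := by
    intro x hx
    rcases eq_or_lt_of_le (mem_Ici.mp hx : (0:ℝ) ≤ x) with rfl | hpos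
    · have hev : h =ᶠ[nhds (0:ℝ)] fun y => g δ + y * (2 / Real.exp 1) := by
        filter_upwards [Iio_mem_nhds he] with y hy
        exact hIic y hy.le
      exact (((hlin (g δ) (2 / Real.exp 1) 0).continuousAt).congr
        hev.symm).continuousWithinAt
    · exact ((hderiv x hpos).continuousAt).continuousWithinAt
  have hconc : ConcaveOn ℝ (Ici (0:ℝ)) h := by
    apply AntitoneOn.concaveOn_of_deriv (convex_Ici 0) hcont
    · rw [interior_Ici]
      exact fun x hx => ((hderiv x hx).differentiableAt).differentiableWithinAt
    · rw [interior_Ici]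
      intro a ha b hb hab
      rw [(hderiv a ha).deriv, (hderiv b hb).deriv]
      exact hanti ha hb hab
  refine ⟨hconc, ?_, ?_⟩
  · intro x hx
    by_cases hxe : x ≤ Real.exp 1
    · rw [hIic x hxe]
      have hx0 : (0:ℝ) ≤ x := hx
      positivity
    · push_neg at hxe
      rw [hIci x hxe.le]
      positivity
  · intro x hx
    have hx0 : 0 < x := lt_of_lt_of_le hδ.1 hx
    by_cases hxe : x ≤ Real.exp 1
    · rw [hIic x hxe]
      simp only [hg]
      by_cases hx1 : x ≤ 1
      · have h1 : Real.log δ ≤ Real.log x := Real.log_le_log hδ.1 hx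
        have h2 : Real.log x ≤ 0 := Real.log_nonpos hx0.le hx1
        nlinarith [mul_pos hx0 (show (0:ℝ) < 2 / Real.exp 1 by positivity)]
      · push_neg at hx1
        have h1 : 0 ≤ Real.log x := Real.log_nonneg hx1.le
        have h2 : Real.log x ≤ 1 := by
          rw [← Real.log_exp 1]; exact Real.log_le_log hx0 hxe
        have h3 := log_le_div_e hx0
        have hδ2 : 0 ≤ (Real.log δ)^2 := sq_nonneg _
        have hsq : (Real.log x)^2 ≤ Real.log x := by nlinarith
        have h4 : x / Real.exp 1 ≤ x * (2 / Real.exp 1) := by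
          have hxe' : 0 ≤ x / Real.exp 1 := by positivity
          have : x * (2 / Real.exp 1) = 2 * (x / Real.exp 1) := by ring
          rw [this]; linarith
        linarith
    · rw [hIci x (le_of_not_ge hxe)]
      simp only [hg]
      nlinarith [sq_nonneg (Real.log δ)]
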